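/- General Manipulability Theorem: Let (F ∪ W, ⊐, h, ≻) be a matching game induced by a stable matching rule h on a many-to-many matching market in which every agent's preference is substitutable and satisfies the law of aggregate demand (LAD). Then every agent a ∈ F ∪ W satisfies the manipulability property with Blair order: if h(≻)(a) ≠ μ_X(≻)(a) (where X = F if a ∈ F and X = W if a ∈ W), then there exists a preference ≻'_a such that h(≻_{-a}, ≻'_a)(a) ≻_a^B h(≻)(a). -/

import Mathlib

/-!
Common framework for many-to-many matching markets (Manasero–Oviedo,
"General Manipulability Theorem for a Matching Model").

Agents on each side have strict linear orders (strict total orders) over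
finsets of the other side.  `Pref.Ch` is the choice function, selecting the
most preferred subset.
-/

/-- A strict preference of an agent over subsets of the (finite) set `α` of
potential partners: a strict total order on `Finset α`, where `gt S T` means
`S` is strictly preferred to `T`. -/
structure Pref (α : Type*) [DecidableEq α] [Fintype α] where
  gt : Finset α → Finset α → Prop
  isSTO : IsStrictTotalOrder (Finset α) gt

namespace Pref

variable {α : Type*} [DecidableEq α] [Fintype α]

/-- The choice set `Ch(S, ≻)`: the `≻`-maximal subset of `S`. -/
noncomputable def Ch (p : Pref α) (S : Finset α) : Finset α := by
  classical
  haveI := p.isSTO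
  haveI : IsStrictTotalOrder (Finset α) (Function.swap p.gt) := IsStrictTotalOrder.swap _
  exact @Finset.max' _ (linearOrderOfSTO (Function.swap p.gt)) S.powerset
    ⟨∅, Finset.empty_mem_powerset S⟩

/-- Substitutability: if `w ∈ Ch(S)` then `w ∈ Ch(S \ {w'})` for any other `w' ∈ S`. -/
def Substitutable (p : Pref α) : Prop :=
  ∀ (S : Finset α) (w w' : α), w ∈ S → w' ∈ S → w ≠ w' →
    w ∈ p.Ch S → w ∈ p.Ch (S.erase w')

/-- Law of aggregate demand: `Y ⊆ X` implies `|Ch(Y)| ≤ |Ch(X)|`. -/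
def LAD (p : Pref α) : Prop :=
  ∀ Y X : Finset α, Y ⊆ X → (p.Ch Y).card ≤ (p.Ch X).card

/-- `p.HasList L` : the sets in `L` are exactly the acceptable sets, in strictly
decreasing order of preference and all preferred to `∅`; any set not in the
list (other than `∅`) is unacceptable, i.e. worse than `∅`. -/
def HasList (p : Pref α) (L : List (Finset α)) : Prop :=
  List.Chain' p.gt (L ++ [∅]) ∧ ∀ S : Finset α, S ∉ L → S ≠ ∅ → p.gt ∅ S

/-- `q`-separability of a preference with quota `q`. -/
def QSeparable (p : Pref α) (q : ℕ) : Prop :=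
  (∀ S : Finset α, q < S.card → p.gt ∅ S) ∧
  (∀ (S : Finset α) (v : α), v ∉ S → S.card < q → (p.gt (insert v S) S ↔ p.gt {v} ∅))

end Pref

/-- `p'` is the restriction `p |_T` of `p` to `T`:
(i) any set not contained in `T` is worse than `∅`;
(ii) for `S ⊆ T`, `S ≻' ∅ ↔ S ≻ ∅`;
(iii) for `S, S' ⊆ T`, `S ≻' S' ↔ S ≻ S'`. -/
def IsRestriction {α : Type*} [DecidableEq α] [Fintype α]
    (p : Pref α) (T : Finset α) (p' : Pref α) : Prop :=
  (∀ S : Finset α, ¬ S ⊆ T → p'.gt ∅ S) ∧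
  (∀ S : Finset α, S ⊆ T → (p'.gt S ∅ ↔ p.gt S ∅)) ∧
  (∀ S S' : Finset α, S ⊆ T → S' ⊆ T → (p'.gt S S' ↔ p.gt S S'))

variable (F W : Type*) [DecidableEq F] [Fintype F] [DecidableEq W] [Fintype W]

/-- A (many-to-many) matching between firms `F` and workers `W`. -/
structure Matching where
  fm : F → Finset W
  wm : W → Finset F
  compat : ∀ f w, w ∈ fm f ↔ f ∈ wm w

/-- A preference profile: one preference for each firm and each worker. -/
structure Profile where
  fp : F → Pref W
  wp : W → Pref F

variable {F W}

/-- All agents' preferences are substitutable. -/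
def Profile.Substitutable (P : Profile F W) : Prop :=
  (∀ f, (P.fp f).Substitutable) ∧ (∀ w, (P.wp w).Substitutable)

/-- All agents' preferences satisfy the law of aggregate demand. -/
def Profile.LAD (P : Profile F W) : Prop :=
  (∀ f, (P.fp f).LAD) ∧ (∀ w, (P.wp w).LAD)

/-- The profile obtained from `P` by replacing firm `f`'s preference by `p`. -/
def Profile.updateFirm (P : Profile F W) (f : F) (p : Pref W) : Profile F W :=
  ⟨Function.update P.fp f p, P.wp⟩

/-- The profile obtained from `P` by replacing worker `w`'s preference by `p`. -/
def Profile.updateWorker (P : Profile F W) (w : W) (p : Pref F) : Profile F W :=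
  ⟨P.fp, Function.update P.wp w p⟩

/-- Individual rationality: every agent chooses its whole assignment. -/
def IndRational (P : Profile F W) (μ : Matching F W) : Prop :=
  (∀ f, (P.fp f).Ch (μ.fm f) = μ.fm f) ∧ (∀ w, (P.wp w).Ch (μ.wm w) = μ.wm w)

/-- The pair `(w, f)` blocks the matching `μ`. -/
def Blocks (P : Profile F W) (μ : Matching F W) (w : W) (f : F) : Prop :=
  w ∉ μ.fm f ∧ w ∈ (P.fp f).Ch (insert w (μ.fm f)) ∧ f ∈ (P.wp w).Ch (insert f (μ.wm w))

/-- (Pairwise) stability. -/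
def Stable (P : Profile F W) (μ : Matching F W) : Prop :=
  IndRational P μ ∧ ∀ w f, ¬ Blocks P μ w f

/-- `μF` is the firm-optimal stable matching for `P`. -/
def FirmOptimal (P : Profile F W) (μF : Matching F W) : Prop :=
  Stable P μF ∧ ∀ μ, Stable P μ → ∀ f, μF.fm f = μ.fm f ∨ (P.fp f).gt (μF.fm f) (μ.fm f)

/-- `μW` is the worker-optimal stable matching for `P`. -/
def WorkerOptimal (P : Profile F W) (μW : Matching F W) : Prop :=
  Stable P μW ∧ ∀ μ, Stable P μ → ∀ w, μW.wm w = μ.wm w ∨ (P.wp w).gt (μW.wm w) (μ.wm w)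

/-- Firm `f` satisfies the manipulability property (w.r.t. the rule `h`, the true
profile `P` and the firm-optimal stable matching `μF`): if `h(≻)(f) ≠ μF(≻)(f)`
then some report `≻'_f` (in the domain: substitutable and LAD) gives `f` a
strictly `≻_f`-better assignment. -/
def FirmManip (h : Profile F W → Matching F W) (P : Profile F W)
    (μF : Matching F W) (f : F) : Prop :=
  (h P).fm f ≠ μF.fm f → ∃ p' : Pref W, p'.Substitutable ∧ p'.LAD ∧
    (P.fp f).gt ((h (P.updateFirm f p')).fm f) ((h P).fm f)

/-- Firm `f` satisfies the manipulability property with Blair order. -/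
def FirmManipB (h : Profile F W → Matching F W) (P : Profile F W)
    (μF : Matching F W) (f : F) : Prop :=
  (h P).fm f ≠ μF.fm f → ∃ p' : Pref W, p'.Substitutable ∧ p'.LAD ∧
    ((P.fp f).Ch ((h (P.updateFirm f p')).fm f ∪ (h P).fm f) = (h (P.updateFirm f p')).fm f ∧
      (h (P.updateFirm f p')).fm f ≠ (h P).fm f)

/-- Worker `w` satisfies the manipulability property. -/
def WorkerManip (h : Profile F W → Matching F W) (P : Profile F W)
    (μW : Matching F W) (w : W) : Prop :=
  (h P).wm w ≠ μW.wm w → ∃ p' : Pref F, p'.Substitutable ∧ p'.LAD ∧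
    (P.wp w).gt ((h (P.updateWorker w p')).wm w) ((h P).wm w)

/-- Worker `w` satisfies the manipulability property with Blair order. -/
def WorkerManipB (h : Profile F W → Matching F W) (P : Profile F W)
    (μW : Matching F W) (w : W) : Prop :=
  (h P).wm w ≠ μW.wm w → ∃ p' : Pref F, p'.Substitutable ∧ p'.LAD ∧
    ((P.wp w).Ch ((h (P.updateWorker w p')).wm w ∪ (h P).wm w) = (h (P.updateWorker w p')).wm w ∧
      (h (P.updateWorker w p')).wm w ≠ (h P).wm w)

namespace Pref
variable {α : Type*} [DecidableEq α] [Fintype α]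

theorem ch_spec (p : Pref α) (S : Finset α) :
    p.Ch S ⊆ S ∧ ∀ T ⊆ S, T ≠ p.Ch S → p.gt (p.Ch S) T := by
  classical
  haveI := p.isSTO
  haveI h2 : IsStrictTotalOrder (Finset α) (Function.swap p.gt) := IsStrictTotalOrder.swap _
  unfold Pref.Ch
  constructor
  · have h := @Finset.max'_mem _ (linearOrderOfSTO (Function.swap p.gt)) S.powerset
      ⟨∅, Finset.empty_mem_powerset S⟩
    exact Finset.mem_powerset.mp h
  · intro T hT hne
    have h := @Finset.le_max' _ (linearOrderOfSTO (Function.swap p.gt)) S.powerset T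
      (Finset.mem_powerset.mpr hT)
    exact @lt_of_le_of_ne _ (linearOrderOfSTO (Function.swap p.gt)).toPartialOrder T _ h hne

theorem ch_subset (p : Pref α) (S : Finset α) : p.Ch S ⊆ S := (p.ch_spec S).1

theorem ch_max (p : Pref α) {S T : Finset α} (hT : T ⊆ S) (hne : T ≠ p.Ch S) :
    p.gt (p.Ch S) T := (p.ch_spec S).2 T hT hne

theorem gt_asymm (p : Pref α) {S T : Finset α} (h1 : p.gt S T) (h2 : p.gt T S) : False := by
  haveI := p.isSTO
  exact absurd (_root_.trans h1 h2) (irrefl S)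

theorem ch_eq_of (p : Pref α) {S M : Finset α} (hM : M ⊆ S)
    (hmax : ∀ T ⊆ S, T ≠ M → p.gt M T) : p.Ch S = M := by
  by_contra hne
  exact p.gt_asymm (hmax _ (p.ch_subset S) hne) (p.ch_max hM (fun h => hne h.symm))

theorem ch_consistency (p : Pref α) {S Y : Finset α} (h1 : p.Ch S ⊆ Y) (h2 : Y ⊆ S) :
    p.Ch Y = p.Ch S := by
  by_contra hne
  exact p.gt_asymm (p.ch_max ((p.ch_subset Y).trans h2) hne)
    (p.ch_max h1 (fun h => hne h.symm))

theorem ch_idem (p : Pref α) (S : Finset α) : p.Ch (p.Ch S) = p.Ch S :=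
  p.ch_consistency (subset_refl _) (p.ch_subset S)

/-- Key consequence of substitutability: chosen elements remain chosen in subsets. -/
theorem mem_ch_of_subset (p : Pref α) (hsub : p.Substitutable) :
    ∀ (n : ℕ) {S S' : Finset α} {w : α}, (S \ S').card = n → S' ⊆ S →
      w ∈ p.Ch S → w ∈ S' → w ∈ p.Ch S' := by
  intro n
  induction n with
  | zero =>
    intro S S' w hcard hss hw hw'
    have : S = S' := Finset.Subset.antisymm
      (fun x hx => by
        by_contra hxn
        have : x ∈ S \ S' := Finset.mem_sdiff.mpr ⟨hx, hxn⟩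
        simp [Finset.card_eq_zero.mp hcard] at this) hss
    exact this ▸ hw
  | succ n ih =>
    intro S S' w hcard hss hw hw'
    have hne : (S \ S').Nonempty := by
      rw [← Finset.card_pos, hcard]; omega
    obtain ⟨x, hx⟩ := hne
    rw [Finset.mem_sdiff] at hx
    have hwx : w ≠ x := fun h => hx.2 (h ▸ hw')
    have hw2 : w ∈ p.Ch (S.erase x) :=
      hsub S w x (p.ch_subset S hw) hx.1 hwx hw
    have hss2 : S' ⊆ S.erase x := fun y hy =>
      Finset.mem_erase.mpr ⟨fun h => hx.2 (h ▸ hy), hss hy⟩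
    have hcard2 : (S.erase x \ S').card = n := by
      have : S.erase x \ S' = (S \ S').erase x := by
        ext y; simp [Finset.mem_erase, Finset.mem_sdiff]; tauto
      rw [this, Finset.card_erase_of_mem (Finset.mem_sdiff.mpr hx), hcard]
      omega
    exact ih hcard2 hss2 hw2 hw'

theorem mem_ch_subset (p : Pref α) (hsub : p.Substitutable) {S S' : Finset α} {w : α}
    (hss : S' ⊆ S) (hw : w ∈ p.Ch S) (hw' : w ∈ S') : w ∈ p.Ch S' :=
  p.mem_ch_of_subset hsub _ rfl hss hw hw'

theorem ir_card (p : Pref α) {S : Finset α} (h : p.Ch S = S) : (p.Ch S).card = S.card := by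
  rw [h]

end Pref
section InterPref
variable {α : Type*} [DecidableEq α] [Fintype α]

open Classical in
/-- Ranking key: prefer larger intersection with `A`, then smaller total size. -/
noncomputable def interKey (A S : Finset α) : ℕ ×ₗ (ℕ ×ₗ ℕ) :=
  toLex (Fintype.card α - (S ∩ A).card, toLex (S.card, (Fintype.equivFin (Finset α) S : ℕ)))

theorem interKey_inj (A : Finset α) : Function.Injective (interKey A) := by
  intro S T h
  unfold interKey at h
  have h2 := congrArg (fun x => (ofLex x).2) h
  simp only [ofLex_toLex] at h2
  have h3 := congrArg (fun x => (ofLex x).2) h2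
  simp only [ofLex_toLex] at h3
  exact (Fintype.equivFin (Finset α)).injective (Fin.val_injective h3)

/-- The preference on `Finset α` whose choice function is `S ↦ S ∩ A`. -/
noncomputable def interPref (A : Finset α) : Pref α where
  gt S T := interKey A S < interKey A T
  isSTO :=
    { trichotomous := fun S T hst hts => by
        rcases lt_trichotomy (interKey A S) (interKey A T) with h | h | h
        · exact absurd h hst
        · exact interKey_inj A h
        · exact absurd h hts
      irrefl := fun S => lt_irrefl _
      trans := fun a b c => lt_trans }

theorem interPref_gt_iff (A S T : Finset α) :
    (interPref A).gt S T ↔ interKey A S < interKey A T := Iff.rfl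

theorem interPref_ch (A S : Finset α) : (interPref A).Ch S = S ∩ A := by
  apply (interPref A).ch_eq_of Finset.inter_subset_left
  intro T hT hne
  rw [interPref_gt_iff]
  unfold interKey
  have hcap : (S ∩ A) ∩ A = S ∩ A := by
    rw [Finset.inter_assoc, Finset.inter_self]
  have hsub : T ∩ A ⊆ S ∩ A := Finset.inter_subset_inter hT (subset_refl A)
  have hle : (T ∩ A).card ≤ (S ∩ A).card := Finset.card_le_card hsub
  rcases lt_or_eq_of_le hle with hlt | heq
  · apply Prod.Lex.left
    have h1 : (S ∩ A).card ≤ Fintype.card α := (Finset.card_le_card (Finset.subset_univ _)).trans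
      (le_of_eq (Finset.card_univ))
    rw [hcap]
    omega
  · have heqset : T ∩ A = S ∩ A := Finset.eq_of_subset_of_card_le hsub (le_of_eq heq.symm)
    have hsub2 : S ∩ A ⊆ T := heqset ▸ Finset.inter_subset_left
    have hcard : (S ∩ A).card < T.card :=
      Finset.card_lt_card (Finset.ssubset_iff_subset_ne.mpr ⟨hsub2, fun h => hne h.symm⟩)
    have : Fintype.card α - ((S ∩ A) ∩ A).card = Fintype.card α - (T ∩ A).card := by
      rw [hcap, heqset]
    rw [this]
    exact Prod.Lex.right _ (Prod.Lex.left _ _ hcard)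

theorem interPref_sub (A : Finset α) : (interPref A).Substitutable := by
  intro S w w' hw hw' hne hch
  rw [interPref_ch] at hch ⊢
  rw [Finset.mem_inter] at hch ⊢
  exact ⟨Finset.mem_erase.mpr ⟨fun h => hne h, hch.1⟩, hch.2⟩

theorem interPref_lad (A : Finset α) : (interPref A).LAD := by
  intro Y X hYX
  rw [interPref_ch, interPref_ch]
  exact Finset.card_le_card (Finset.inter_subset_inter hYX (subset_refl A))

end InterPref
section Machinery
open Finset
variable {F W : Type*} [DecidableEq F] [Fintype F] [DecidableEq W] [Fintype W]

def rowF (X : Finset (F × W)) (f : F) : Finset W := univ.filter (fun w => (f, w) ∈ X)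
def rowW (X : Finset (F × W)) (w : W) : Finset F := univ.filter (fun f => (f, w) ∈ X)

@[simp] theorem mem_rowF {X : Finset (F × W)} {f w} : w ∈ rowF X f ↔ (f, w) ∈ X := by
  simp [rowF]
@[simp] theorem mem_rowW {X : Finset (F × W)} {f w} : f ∈ rowW X w ↔ (f, w) ∈ X := by
  simp [rowW]

theorem rowF_mono {X X' : Finset (F × W)} (h : X ⊆ X') (f : F) : rowF X f ⊆ rowF X' f :=
  fun w hw => mem_rowF.mpr (h (mem_rowF.mp hw))
theorem rowW_mono {X X' : Finset (F × W)} (h : X ⊆ X') (w : W) : rowW X w ⊆ rowW X' w :=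
  fun f hf => mem_rowW.mpr (h (mem_rowW.mp hf))

variable (Q : Profile F W)

open Classical in
noncomputable def RejF (X : Finset (F × W)) : Finset (F × W) :=
  X.filter (fun x => x.2 ∉ (Q.fp x.1).Ch (rowF X x.1))
open Classical in
noncomputable def RejW (X : Finset (F × W)) : Finset (F × W) :=
  X.filter (fun x => x.1 ∉ (Q.wp x.2).Ch (rowW X x.2))

theorem mem_RejF {X : Finset (F × W)} {x : F × W} :
    x ∈ RejF Q X ↔ x ∈ X ∧ x.2 ∉ (Q.fp x.1).Ch (rowF X x.1) := by
  simp [RejF]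
theorem mem_RejW {X : Finset (F × W)} {x : F × W} :
    x ∈ RejW Q X ↔ x ∈ X ∧ x.1 ∉ (Q.wp x.2).Ch (rowW X x.2) := by
  simp [RejW]

theorem RejF_mono (hQs : Q.Substitutable) {X X' : Finset (F × W)} (h : X ⊆ X') :
    RejF Q X ⊆ RejF Q X' := by
  intro x hx
  rw [mem_RejF] at hx ⊢
  refine ⟨h hx.1, fun hmem => hx.2 ?_⟩
  exact (Q.fp x.1).mem_ch_subset (hQs.1 x.1) (rowF_mono h x.1) hmem (mem_rowF.mpr hx.1)

theorem RejW_mono (hQs : Q.Substitutable) {X X' : Finset (F × W)} (h : X ⊆ X') :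
    RejW Q X ⊆ RejW Q X' := by
  intro x hx
  rw [mem_RejW] at hx ⊢
  refine ⟨h hx.1, fun hmem => hx.2 ?_⟩
  exact (Q.wp x.2).mem_ch_subset (hQs.2 x.2) (rowW_mono h x.2) hmem (mem_rowW.mpr hx.1)

/-- A fixed point of the Hatfield–Milgrom style operator. -/
def IsFixedPair (a b : Finset (F × W)) : Prop :=
  a = univ \ RejW Q b ∧ b = univ \ RejF Q a

theorem fix_mem_b {a b : Finset (F × W)} (hfix : IsFixedPair Q a b) {x : F × W} :
    x ∈ b ↔ (x ∉ a ∨ x.2 ∈ (Q.fp x.1).Ch (rowF a x.1)) := by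
  rw [hfix.2]
  simp [mem_RejF]
  tauto

theorem fix_mem_a {a b : Finset (F × W)} (hfix : IsFixedPair Q a b) {x : F × W} :
    x ∈ a ↔ (x ∉ b ∨ x.1 ∈ (Q.wp x.2).Ch (rowW b x.2)) := by
  rw [hfix.1]
  simp [mem_RejW]
  tauto

theorem fix_inter_f {a b : Finset (F × W)} (hfix : IsFixedPair Q a b) {f : F} {w : W} :
    (f, w) ∈ a ∩ b ↔ w ∈ (Q.fp f).Ch (rowF a f) := by
  rw [mem_inter, fix_mem_b Q hfix]
  constructor
  · rintro ⟨ha, hb | hb⟩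
    · exact absurd ha hb
    · exact hb
  · intro h
    exact ⟨mem_rowF.mp ((Q.fp f).ch_subset _ h), Or.inr h⟩

theorem fix_inter_w {a b : Finset (F × W)} (hfix : IsFixedPair Q a b) {f : F} {w : W} :
    (f, w) ∈ a ∩ b ↔ f ∈ (Q.wp w).Ch (rowW b w) := by
  rw [mem_inter, fix_mem_a Q hfix]
  constructor
  · rintro ⟨ha | ha, hb⟩
    · exact absurd hb ha
    · exact ha
  · intro h
    exact ⟨Or.inr h, mem_rowW.mp ((Q.wp w).ch_subset _ h)⟩

/-- The matching induced by a fixed pair. -/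
noncomputable def matchOf (a b : Finset (F × W)) (hfix : IsFixedPair Q a b) : Matching F W where
  fm f := (Q.fp f).Ch (rowF a f)
  wm w := (Q.wp w).Ch (rowW b w)
  compat f w := by rw [← fix_inter_f Q hfix, ← fix_inter_w Q hfix]

theorem matchOf_fm {a b : Finset (F × W)} (hfix : IsFixedPair Q a b) (f : F) :
    (matchOf Q a b hfix).fm f = (Q.fp f).Ch (rowF a f) := rfl
theorem matchOf_wm {a b : Finset (F × W)} (hfix : IsFixedPair Q a b) (w : W) :
    (matchOf Q a b hfix).wm w = (Q.wp w).Ch (rowW b w) := rfl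

theorem matchOf_stable {a b : Finset (F × W)} (hfix : IsFixedPair Q a b) :
    Stable Q (matchOf Q a b hfix) := by
  constructor
  · exact ⟨fun f => (Q.fp f).ch_idem _, fun w => (Q.wp w).ch_idem _⟩
  · rintro w f ⟨h1, h2, h3⟩
    by_cases hab : (f, w) ∈ a
    · -- w is in f's opportunity row; consistency forces w ∈ μ.fm f
      apply h1
      rw [matchOf_fm] at h2 ⊢
      have hsub1 : insert w ((Q.fp f).Ch (rowF a f)) ⊆ rowF a f :=
        insert_subset (mem_rowF.mpr hab) ((Q.fp f).ch_subset _)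
      have := (Q.fp f).ch_consistency (Y := insert w ((Q.fp f).Ch (rowF a f)))
        (subset_insert _ _) hsub1
      rw [this] at h2
      exact h2
    · -- (f,w) ∈ RejW b : w rejects f
      have hx : (f, w) ∈ RejW Q b := by
        have := hfix.1
        by_contra hc
        exact hab (this ▸ mem_sdiff.mpr ⟨mem_univ _, hc⟩)
      rw [mem_RejW] at hx
      rw [matchOf_wm] at h3
      have hsub1 : insert f ((Q.wp w).Ch (rowW b w)) ⊆ rowW b w :=
        insert_subset (mem_rowW.mpr hx.1) ((Q.wp w).ch_subset _)
      have := (Q.wp w).ch_consistency (Y := insert f ((Q.wp w).Ch (rowW b w)))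
        (subset_insert _ _) hsub1
      rw [this] at h3
      exact hx.2 h3

end Machinery
section Machinery2
open Finset
set_option linter.unusedSectionVars false
variable {F W : Type*} [DecidableEq F] [Fintype F] [DecidableEq W] [Fintype W]
variable (Q : Profile F W)

/-- Contract set of a matching. -/
def Mset (μ : Matching F W) : Finset (F × W) := univ.filter (fun x => x.2 ∈ μ.fm x.1)

@[simp] theorem mem_Mset {μ : Matching F W} {x : F × W} : x ∈ Mset μ ↔ x.2 ∈ μ.fm x.1 := by
  simp [Mset]

theorem mem_Mset' {μ : Matching F W} {x : F × W} : x ∈ Mset μ ↔ x.1 ∈ μ.wm x.2 := by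
  rw [mem_Mset, μ.compat]

@[simp] theorem rowF_Mset {μ : Matching F W} (f : F) : rowF (Mset μ) f = μ.fm f := by
  ext w; simp
@[simp] theorem rowW_Mset {μ : Matching F W} (w : W) : rowW (Mset μ) w = μ.wm w := by
  ext f; simp [mem_Mset' (x := (f, w))]

open Classical in
/-- Worker-willingness contract set at a matching: firms' opportunity sets. -/
noncomputable def Bset (μ : Matching F W) : Finset (F × W) :=
  univ.filter (fun x => x.1 ∈ (Q.wp x.2).Ch (insert x.1 (μ.wm x.2)))

theorem mem_Bset {μ : Matching F W} {x : F × W} :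
    x ∈ Bset Q μ ↔ x.1 ∈ (Q.wp x.2).Ch (insert x.1 (μ.wm x.2)) := by
  simp [Bset]

/-- Workers' opportunity contract set at a matching. -/
noncomputable def bset (μ : Matching F W) : Finset (F × W) :=
  Mset μ ∪ (univ \ Bset Q μ)

theorem mem_bset {μ : Matching F W} {x : F × W} :
    x ∈ bset Q μ ↔ (x.2 ∈ μ.fm x.1 ∨ x.1 ∉ (Q.wp x.2).Ch (insert x.1 (μ.wm x.2))) := by
  simp [bset, mem_Bset]

variable {Q}

theorem Mset_subset_Bset {μ : Matching F W} (hir : IndRational Q μ) : Mset μ ⊆ Bset Q μ := by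
  intro x hx
  rw [mem_Mset' ] at hx
  rw [mem_Bset, insert_eq_self.mpr hx, hir.2]
  exact hx

theorem Mset_subset_bset {μ : Matching F W} : Mset μ ⊆ bset Q μ := subset_union_left

theorem fm_subset_rowF_Bset {μ : Matching F W} (hir : IndRational Q μ) (f : F) :
    μ.fm f ⊆ rowF (Bset Q μ) f := by
  intro w hw
  exact mem_rowF.mpr (Mset_subset_Bset hir (mem_Mset.mpr hw))

theorem wm_subset_rowW_bset {μ : Matching F W} (w : W) : μ.wm w ⊆ rowW (bset Q μ) w := by
  intro f hf
  exact mem_rowW.mpr (Mset_subset_bset (mem_Mset'.mpr hf))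

/-- At a stable matching, a firm choosing from all willing workers picks its own match. -/
theorem ch_rowF_Bset (hQs : Q.Substitutable) {μ : Matching F W} (hst : Stable Q μ) (f : F) :
    (Q.fp f).Ch (rowF (Bset Q μ) f) = μ.fm f := by
  have hsub : μ.fm f ⊆ rowF (Bset Q μ) f := fm_subset_rowF_Bset hst.1 f
  have hch : (Q.fp f).Ch (rowF (Bset Q μ) f) ⊆ μ.fm f := by
    intro w hw
    by_contra hwn
    have hwB : (f, w) ∈ Bset Q μ := mem_rowF.mp ((Q.fp f).ch_subset _ hw)
    rw [mem_Bset] at hwB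
    have hw2 : w ∈ (Q.fp f).Ch (insert w (μ.fm f)) :=
      (Q.fp f).mem_ch_subset (hQs.1 f)
        (insert_subset ((Q.fp f).ch_subset _ hw) hsub) hw (mem_insert_self _ _)
    exact hst.2 w f ⟨hwn, hw2, hwB⟩
  rw [← (Q.fp f).ch_consistency hch hsub, hst.1.1 f]

/-- A worker choosing from its opportunity row picks its own match. -/
theorem ch_rowW_bset (hQs : Q.Substitutable) {μ : Matching F W} (hir : IndRational Q μ) (w : W) :
    (Q.wp w).Ch (rowW (bset Q μ) w) = μ.wm w := by
  have hsub : μ.wm w ⊆ rowW (bset Q μ) w := wm_subset_rowW_bset w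
  have hch : (Q.wp w).Ch (rowW (bset Q μ) w) ⊆ μ.wm w := by
    intro f hf
    by_contra hfn
    have hfb : (f, w) ∈ bset Q μ := mem_rowW.mp ((Q.wp w).ch_subset _ hf)
    rw [mem_bset] at hfb
    have hf2 : f ∈ (Q.wp w).Ch (insert f (μ.wm w)) :=
      (Q.wp w).mem_ch_subset (hQs.2 w)
        (insert_subset ((Q.wp w).ch_subset _ hf) hsub) hf (mem_insert_self _ _)
    rcases hfb with hfb | hfb
    · exact hfn (μ.compat f w |>.mp hfb)
    · exact hfb hf2
  rw [← (Q.wp w).ch_consistency hch hsub, hir.2 w]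

/-- Every stable matching yields a fixed pair. -/
theorem stable_isFixedPair (hQs : Q.Substitutable) {μ : Matching F W} (hst : Stable Q μ) :
    IsFixedPair Q (Bset Q μ) (bset Q μ) := by
  constructor
  · ext x
    rcases x with ⟨f, w⟩
    rw [mem_sdiff, mem_RejW, ch_rowW_bset hQs hst.1, mem_Bset, mem_bset]
    have hMB : (f, w) ∈ Mset μ → (f, w) ∈ Bset Q μ := fun h => Mset_subset_Bset hst.1 h
    rw [mem_Mset] at hMB
    rw [mem_Bset] at hMB
    simp only [mem_univ, true_and]
    constructor
    · intro h
      rintro ⟨h1 | h1, h2⟩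
      · exact h2 ((μ.compat f w).mp h1)
      · exact h1 h
    · intro h
      by_contra hc
      exact h ⟨Or.inr hc, fun hm => hc (hMB ((μ.compat f w).mpr hm))⟩
  · ext x
    rcases x with ⟨f, w⟩
    rw [mem_bset, mem_sdiff, mem_RejF, ch_rowF_Bset hQs hst, mem_Bset]
    simp only [mem_univ, true_and]
    have hMB : w ∈ μ.fm f → f ∈ (Q.wp w).Ch (insert f (μ.wm w)) := by
      intro h
      have := Mset_subset_Bset hst.1 ((mem_Mset (x := (f, w))).mpr h)
      rwa [mem_Bset] at this
    constructor
    · rintro (h | h)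
      · rintro ⟨_, h2⟩; exact h2 h
      · rintro ⟨h1, _⟩; exact h h1
    · intro h
      by_cases hw : w ∈ μ.fm f
      · exact Or.inl hw
      · exact Or.inr (fun hb => h ⟨hb, hw⟩)

end Machinery2
section Machinery3
open Finset OrderDual
set_option linter.unusedSectionVars false
variable {F W : Type*} [DecidableEq F] [Fintype F] [DecidableEq W] [Fintype W]
variable (Q : Profile F W)

noncomputable local instance : CompleteLattice (Finset (F × W)) :=
  Fintype.toCompleteLattice _

/-- The Hatfield–Milgrom operator on pairs of contract sets. -/
noncomputable def Phi (hQs : Q.Substitutable) :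
    (Finset (F × W) × (Finset (F × W))ᵒᵈ) →o (Finset (F × W) × (Finset (F × W))ᵒᵈ) where
  toFun x := (univ \ RejW Q (ofDual x.2), toDual (univ \ RejF Q x.1))
  monotone' := by
    intro x y hxy
    have h1 : x.1 ⊆ y.1 := hxy.1
    have h2 : ofDual y.2 ⊆ ofDual x.2 := hxy.2
    constructor
    · exact sdiff_subset_sdiff (subset_refl _) (RejW_mono Q hQs h2)
    · show toDual _ ≤ toDual _
      rw [toDual_le_toDual]
      exact sdiff_subset_sdiff (subset_refl _) (RejF_mono Q hQs h1)

theorem Phi_fixed_iff (hQs : Q.Substitutable) (x : Finset (F × W) × (Finset (F × W))ᵒᵈ) :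
    Phi Q hQs x = x ↔ IsFixedPair Q x.1 (ofDual x.2) := by
  obtain ⟨a, b⟩ := x
  rw [Prod.ext_iff]
  unfold Phi IsFixedPair
  simp only [OrderHom.coe_mk]
  constructor
  · rintro ⟨h1, h2⟩
    exact ⟨h1.symm, congrArg ofDual h2.symm⟩
  · rintro ⟨h1, h2⟩
    exact ⟨h1.symm, congrArg toDual h2.symm⟩

theorem sum_fm_eq_sum_wm (μ : Matching F W) :
    ∑ f, (μ.fm f).card = ∑ w, (μ.wm w).card := by
  classical
  have h1 : (Mset μ).card = ∑ f, ((Mset μ).filter (fun x => x.1 = f)).card :=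
    card_eq_sum_card_fiberwise (fun x _ => mem_univ x.1)
  have h2 : (Mset μ).card = ∑ w, ((Mset μ).filter (fun x => x.2 = w)).card :=
    card_eq_sum_card_fiberwise (fun x _ => mem_univ x.2)
  have e1 : ∀ f, ((Mset μ).filter (fun x => x.1 = f)).card = (μ.fm f).card := by
    intro f
    rw [show (Mset μ).filter (fun x => x.1 = f) = (μ.fm f).image (fun w => (f, w)) by
      ext ⟨g, w⟩
      simp only [mem_filter, mem_Mset, mem_image, Prod.mk.injEq]
      constructor
      · rintro ⟨hm, rfl⟩; exact ⟨w, hm, rfl, rfl⟩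
      · rintro ⟨w', hw', rfl, rfl⟩; exact ⟨hw', rfl⟩]
    exact card_image_of_injective _ (fun a b h => (Prod.mk.injEq _ _ _ _).mp h |>.2)
  have e2 : ∀ w, ((Mset μ).filter (fun x => x.2 = w)).card = (μ.wm w).card := by
    intro w
    rw [show (Mset μ).filter (fun x => x.2 = w) = (μ.wm w).image (fun f => (f, w)) by
      ext ⟨g, w'⟩
      simp only [mem_filter, mem_image, Prod.mk.injEq, mem_Mset' (x := (g, w'))]
      constructor
      · rintro ⟨hm, rfl⟩; exact ⟨g, hm, rfl, rfl⟩
      · rintro ⟨f', hf', rfl, rfl⟩; exact ⟨hf', rfl⟩]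
    exact card_image_of_injective _ (fun a b h => (Prod.mk.injEq _ _ _ _).mp h |>.1)
  have h3 : ∑ f, (μ.fm f).card = (Mset μ).card := by
    rw [h1]; exact Finset.sum_congr rfl (fun f _ => (e1 f).symm)
  rw [h3, h2]
  exact Finset.sum_congr rfl (fun w _ => e2 w)

/-- Master theorem: firm-Blair-optimal and worker-Blair-optimal stable matchings exist,
and the rural hospitals theorem holds. -/
theorem market_results (hQs : Q.Substitutable) (hQl : Q.LAD) :
    ∃ μs μl : Matching F W, Stable Q μs ∧ Stable Q μl ∧
      (∀ μ, Stable Q μ → ∀ f, (Q.fp f).Ch (μs.fm f ∪ μ.fm f) = μs.fm f) ∧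
      (∀ μ, Stable Q μ → ∀ w, (Q.wp w).Ch (μl.wm w ∪ μ.wm w) = μl.wm w) ∧
      (∀ μ, Stable Q μ → ∀ f, (μ.fm f).card = (μs.fm f).card) ∧
      (∀ μ, Stable Q μ → ∀ w, (μ.wm w).card = (μl.wm w).card) := by
  classical
  set Φ := Phi Q hQs with hΦ
  set g := OrderHom.gfp Φ with hg
  set l := OrderHom.lfp Φ with hl
  have hgfix : IsFixedPair Q g.1 (ofDual g.2) :=
    (Phi_fixed_iff Q hQs g).mp (OrderHom.map_gfp Φ)
  have hlfix : IsFixedPair Q l.1 (ofDual l.2) :=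
    (Phi_fixed_iff Q hQs l).mp (OrderHom.map_lfp Φ)
  set μs := matchOf Q g.1 (ofDual g.2) hgfix with hμs
  set μl := matchOf Q l.1 (ofDual l.2) hlfix with hμl
  have hμs_st : Stable Q μs := matchOf_stable Q hgfix
  have hμl_st : Stable Q μl := matchOf_stable Q hlfix
  -- for each stable matching, its fixed pair is between l and g
  have key : ∀ μ : Matching F W, Stable Q μ →
      Bset Q μ ⊆ g.1 ∧ ofDual g.2 ⊆ bset Q μ ∧ l.1 ⊆ Bset Q μ ∧ bset Q μ ⊆ ofDual l.2 := by
    intro μ hst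
    have hfix := stable_isFixedPair hQs hst
    have hfx : Φ (Bset Q μ, toDual (bset Q μ)) = (Bset Q μ, toDual (bset Q μ)) :=
      (Phi_fixed_iff Q hQs _).mpr (by simpa using hfix)
    have h1 : (Bset Q μ, toDual (bset Q μ)) ≤ g := Φ.le_gfp (le_of_eq hfx.symm)
    have h2 : l ≤ (Bset Q μ, toDual (bset Q μ)) := Φ.lfp_le (le_of_eq hfx)
    refine ⟨h1.1, ?_, h2.1, ?_⟩
    · exact h1.2
    · exact h2.2
  -- Blair dominance of μs on the firm side
  have domF : ∀ μ, Stable Q μ → ∀ f, (Q.fp f).Ch (μs.fm f ∪ μ.fm f) = μs.fm f := by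
    intro μ hst f
    obtain ⟨hBg, _, _, _⟩ := key μ hst
    have hY : μs.fm f ∪ μ.fm f ⊆ rowF g.1 f := by
      apply union_subset
      · exact (Q.fp f).ch_subset _
      · exact (fm_subset_rowF_Bset hst.1 f).trans (rowF_mono hBg f)
    have hC : (Q.fp f).Ch (rowF g.1 f) ⊆ μs.fm f ∪ μ.fm f := by
      rw [← matchOf_fm Q hgfix f]; exact subset_union_left
    have := (Q.fp f).ch_consistency hC hY
    rw [this]
    exact (matchOf_fm Q hgfix f).symm
  -- Blair dominance of μl on the worker side
  have domW : ∀ μ, Stable Q μ → ∀ w, (Q.wp w).Ch (μl.wm w ∪ μ.wm w) = μl.wm w := by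
    intro μ hst w
    obtain ⟨_, _, _, hbl⟩ := key μ hst
    have hY : μl.wm w ∪ μ.wm w ⊆ rowW (ofDual l.2) w := by
      apply union_subset
      · exact (Q.wp w).ch_subset _
      · exact (wm_subset_rowW_bset w).trans (rowW_mono hbl w)
    have hC : (Q.wp w).Ch (rowW (ofDual l.2) w) ⊆ μl.wm w ∪ μ.wm w := by
      rw [← matchOf_wm Q hlfix w]; exact subset_union_left
    have := (Q.wp w).ch_consistency hC hY
    rw [this]
    exact (matchOf_wm Q hlfix w).symm
  -- anti-dominance: every stable matching Blair-dominates μl on the firm side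
  have antidomF : ∀ μ, Stable Q μ → ∀ f, (Q.fp f).Ch (μ.fm f ∪ μl.fm f) = μ.fm f := by
    intro μ hst f
    obtain ⟨_, _, hlB, _⟩ := key μ hst
    have hY : μ.fm f ∪ μl.fm f ⊆ rowF (Bset Q μ) f := by
      apply union_subset
      · exact fm_subset_rowF_Bset hst.1 f
      · exact ((Q.fp f).ch_subset _).trans (rowF_mono hlB f)
    have hC : (Q.fp f).Ch (rowF (Bset Q μ) f) ⊆ μ.fm f ∪ μl.fm f := by
      rw [ch_rowF_Bset hQs hst]
      exact subset_union_left
    have := (Q.fp f).ch_consistency hC hY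
    rw [this, ch_rowF_Bset hQs hst]
  -- anti-dominance: every stable matching Blair-dominates μs on the worker side
  have antidomW : ∀ μ, Stable Q μ → ∀ w, (Q.wp w).Ch (μ.wm w ∪ μs.wm w) = μ.wm w := by
    intro μ hst w
    obtain ⟨_, hgb, _, _⟩ := key μ hst
    have hY : μ.wm w ∪ μs.wm w ⊆ rowW (bset Q μ) w := by
      apply union_subset
      · exact wm_subset_rowW_bset w
      · exact ((Q.wp w).ch_subset _).trans (rowW_mono hgb w)
    have hC : (Q.wp w).Ch (rowW (bset Q μ) w) ⊆ μ.wm w ∪ μs.wm w := by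
      rw [ch_rowW_bset hQs hst.1]
      exact subset_union_left
    have := (Q.wp w).ch_consistency hC hY
    rw [this, ch_rowW_bset hQs hst.1]
  -- cardinality comparisons
  have c1 : ∀ μ, Stable Q μ → ∀ f, (μ.fm f).card ≤ (μs.fm f).card := by
    intro μ hst f
    have := hQl.1 f (μ.fm f) (μs.fm f ∪ μ.fm f) subset_union_right
    rwa [hst.1.1 f, domF μ hst f] at this
  have c2 : ∀ μ, Stable Q μ → ∀ w, (μ.wm w).card ≤ (μl.wm w).card := by
    intro μ hst w
    have := hQl.2 w (μ.wm w) (μl.wm w ∪ μ.wm w) subset_union_right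
    rwa [hst.1.2 w, domW μ hst w] at this
  have c3 : ∀ μ, Stable Q μ → ∀ f, (μl.fm f).card ≤ (μ.fm f).card := by
    intro μ hst f
    have := hQl.1 f (μl.fm f) (μ.fm f ∪ μl.fm f) subset_union_right
    rwa [hμl_st.1.1 f, antidomF μ hst f] at this
  have c4 : ∀ μ, Stable Q μ → ∀ w, (μs.wm w).card ≤ (μ.wm w).card := by
    intro μ hst w
    have := hQl.2 w (μs.wm w) (μ.wm w ∪ μs.wm w) subset_union_right
    rwa [hμs_st.1.2 w, antidomW μ hst w] at this
  -- sums are all equal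
  have ssum : ∑ f, (μl.fm f).card = ∑ f, (μs.fm f).card := by
    have h1 : ∑ f, (μs.fm f).card ≤ ∑ f, (μl.fm f).card := by
      rw [sum_fm_eq_sum_wm, sum_fm_eq_sum_wm]
      exact Finset.sum_le_sum (fun w _ => c2 μs hμs_st w)
    have h2 : ∑ f, (μl.fm f).card ≤ ∑ f, (μs.fm f).card :=
      Finset.sum_le_sum (fun f _ => c3 μs hμs_st f)
    omega
  have pw_f : ∀ f, (μl.fm f).card = (μs.fm f).card := by
    have := (Finset.sum_eq_sum_iff_of_le (fun f _ => c3 μs hμs_st f)).mp ssum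
    exact fun f => this f (mem_univ f)
  have wsum : ∑ w, (μs.wm w).card = ∑ w, (μl.wm w).card := by
    rw [← sum_fm_eq_sum_wm, ← sum_fm_eq_sum_wm, ssum]
  have pw_w : ∀ w, (μs.wm w).card = (μl.wm w).card := by
    have := (Finset.sum_eq_sum_iff_of_le (fun w _ => c4 μl hμl_st w)).mp wsum
    exact fun w => this w (mem_univ w)
  refine ⟨μs, μl, hμs_st, hμl_st, domF, domW, ?_, ?_⟩
  · intro μ hst f
    exact le_antisymm (c1 μ hst f) (pw_f f ▸ c3 μ hst f)
  · intro μ hst w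
    exact le_antisymm (c2 μ hst w) (pw_w w ▸ c4 μ hst w)

end Machinery3
section Final
open Finset
set_option linter.unusedSectionVars false
variable {F W : Type*} [DecidableEq F] [Fintype F] [DecidableEq W] [Fintype W]

@[simp] theorem updateFirm_fp (P : Profile F W) (f : F) (p : Pref W) :
    (P.updateFirm f p).fp = Function.update P.fp f p := rfl
@[simp] theorem updateFirm_wp (P : Profile F W) (f : F) (p : Pref W) :
    (P.updateFirm f p).wp = P.wp := rfl
@[simp] theorem updateWorker_fp (P : Profile F W) (w : W) (p : Pref F) :
    (P.updateWorker w p).fp = P.fp := rfl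
@[simp] theorem updateWorker_wp (P : Profile F W) (w : W) (p : Pref F) :
    (P.updateWorker w p).wp = Function.update P.wp w p := rfl

theorem updateFirm_sub (P : Profile F W) (f : F) (p : Pref W) (hs : P.Substitutable)
    (hp : p.Substitutable) : (P.updateFirm f p).Substitutable := by
  refine ⟨fun g => ?_, hs.2⟩
  by_cases hg : g = f
  · subst hg; rw [updateFirm_fp, Function.update_self]; exact hp
  · rw [updateFirm_fp, Function.update_of_ne hg]; exact hs.1 g

theorem updateFirm_lad (P : Profile F W) (f : F) (p : Pref W) (hs : P.LAD)
    (hp : p.LAD) : (P.updateFirm f p).LAD := by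
  refine ⟨fun g => ?_, hs.2⟩
  by_cases hg : g = f
  · subst hg; rw [updateFirm_fp, Function.update_self]; exact hp
  · rw [updateFirm_fp, Function.update_of_ne hg]; exact hs.1 g

theorem updateWorker_sub (P : Profile F W) (w : W) (p : Pref F) (hs : P.Substitutable)
    (hp : p.Substitutable) : (P.updateWorker w p).Substitutable := by
  refine ⟨hs.1, fun v => ?_⟩
  by_cases hv : v = w
  · subst hv; rw [updateWorker_wp, Function.update_self]; exact hp
  · rw [updateWorker_wp, Function.update_of_ne hv]; exact hs.2 v

theorem updateWorker_lad (P : Profile F W) (w : W) (p : Pref F) (hs : P.LAD)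
    (hp : p.LAD) : (P.updateWorker w p).LAD := by
  refine ⟨hs.1, fun v => ?_⟩
  by_cases hv : v = w
  · subst hv; rw [updateWorker_wp, Function.update_self]; exact hp
  · rw [updateWorker_wp, Function.update_of_ne hv]; exact hs.2 v

/-- A stable matching stays stable when one firm truncates to its own assignment. -/
theorem stable_updateFirm_inter (P : Profile F W) (f : F) (μ : Matching F W)
    (hst : Stable P μ) : Stable (P.updateFirm f (interPref (μ.fm f))) μ := by
  constructor
  · constructor
    · intro g
      by_cases hg : g = f
      · subst hg
        rw [updateFirm_fp, Function.update_self, interPref_ch, Finset.inter_self]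
      · rw [updateFirm_fp, Function.update_of_ne hg]; exact hst.1.1 g
    · exact hst.1.2
  · rintro w g ⟨h1, h2, h3⟩
    by_cases hg : g = f
    · subst hg
      rw [updateFirm_fp, Function.update_self, interPref_ch] at h2
      exact h1 (Finset.mem_inter.mp h2).2
    · rw [updateFirm_fp, Function.update_of_ne hg] at h2
      exact hst.2 w g ⟨h1, h2, h3⟩

/-- A stable matching stays stable when one worker truncates to its own assignment. -/
theorem stable_updateWorker_inter (P : Profile F W) (w : W) (μ : Matching F W)
    (hst : Stable P μ) : Stable (P.updateWorker w (interPref (μ.wm w))) μ := by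
  constructor
  · constructor
    · exact hst.1.1
    · intro v
      by_cases hv : v = w
      · subst hv
        rw [updateWorker_wp, Function.update_self, interPref_ch, Finset.inter_self]
      · rw [updateWorker_wp, Function.update_of_ne hv]; exact hst.1.2 v
  · rintro v g ⟨h1, h2, h3⟩
    by_cases hv : v = w
    · subst hv
      rw [updateWorker_wp, Function.update_self, interPref_ch] at h3
      have h4 : g ∈ μ.wm v := (Finset.mem_inter.mp h3).2
      exact h1 ((μ.compat g v).mpr h4)
    · rw [updateWorker_wp, Function.update_of_ne hv] at h3
      exact hst.2 v g ⟨h1, h2, h3⟩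

end Final

/-- General Manipulability Theorem.  In the matching game induced
by a stable matching rule `h` on a market with substitutable and LAD preferences,
every agent satisfies the manipulability property with Blair order: if
`h(≻)(a) ≠ μ_X(≻)(a)` (where `X` is the agent's side), then there exists a report
`≻'_a` with `h(≻_{-a}, ≻'_a)(a) ≻_a^B h(≻)(a)`. -/
theorem stmt5 {F W : Type*} [DecidableEq F] [Fintype F] [DecidableEq W] [Fintype W]
    (P : Profile F W) (hsub : P.Substitutable) (hlad : P.LAD)
    (h : Profile F W → Matching F W)
    (hrule : ∀ P' : Profile F W, P'.Substitutable → P'.LAD → Stable P' (h P'))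
    (μF μW : Matching F W) (hF : FirmOptimal P μF) (hW : WorkerOptimal P μW) :
    (∀ f : F, FirmManipB h P μF f) ∧ (∀ w : W, WorkerManipB h P μW w) := by
  obtain ⟨μs, μl, hs_st, hl_st, domF, domW, rhtF, rhtW⟩ := market_results P hsub hlad
  have hPst : Stable P (h P) := hrule P hsub hlad
  constructor
  · -- firms
    intro f hne
    -- identify the firm-optimal assignment with the Blair-optimal one
    have hid : μF.fm f = μs.fm f := by
      rcases hF.2 μs hs_st f with hcase | hcase
      · exact hcase
      · by_contra hne2
        have hgt : (P.fp f).gt (μs.fm f) (μF.fm f) := by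
          have := (P.fp f).ch_max (S := μs.fm f ∪ μF.fm f) (T := μF.fm f)
            Finset.subset_union_right (by rw [domF μF hF.1 f]; exact hne2)
          rwa [domF μF hF.1 f] at this
        exact (P.fp f).gt_asymm hcase hgt
    set p' := interPref (μs.fm f) with hp'
    set P' := P.updateFirm f p' with hP'
    have hsub' : P'.Substitutable := updateFirm_sub P f p' hsub (interPref_sub _)
    have hlad' : P'.LAD := updateFirm_lad P f p' hlad (interPref_lad _)
    have hs_st' : Stable P' μs := stable_updateFirm_inter P f μs hs_st
    obtain ⟨νs, νl, hνs_st, hνl_st, domF', domW', rhtF', rhtW'⟩ :=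
      market_results P' hsub' hlad'
    have hP'st : Stable P' (h P') := hrule P' hsub' hlad'
    have hcard : ((h P').fm f).card = (μs.fm f).card := by
      rw [rhtF' (h P') hP'st f, rhtF' μs hs_st' f]
    have hsubA : (h P').fm f ⊆ μs.fm f := by
      have hir := hP'st.1.1 f
      rw [hP', updateFirm_fp, Function.update_self, hp', interPref_ch] at hir
      intro w hw
      rw [← hir] at hw
      exact (Finset.mem_inter.mp hw).2
    have heq : (h P').fm f = μs.fm f :=
      Finset.eq_of_subset_of_card_le hsubA (le_of_eq hcard.symm)
    refine ⟨p', interPref_sub _, interPref_lad _, ?_, ?_⟩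
    · rw [← hP', heq]
      exact domF (h P) hPst f
    · rw [← hP', heq, ← hid]
      exact Ne.symm hne
  · -- workers
    intro w hne
    have hid : μW.wm w = μl.wm w := by
      rcases hW.2 μl hl_st w with hcase | hcase
      · exact hcase
      · by_contra hne2
        have hgt : (P.wp w).gt (μl.wm w) (μW.wm w) := by
          have := (P.wp w).ch_max (S := μl.wm w ∪ μW.wm w) (T := μW.wm w)
            Finset.subset_union_right (by rw [domW μW hW.1 w]; exact hne2)
          rwa [domW μW hW.1 w] at this
        exact (P.wp w).gt_asymm hcase hgt
    set p' := interPref (μl.wm w) with hp'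
    set P' := P.updateWorker w p' with hP'
    have hsub' : P'.Substitutable := updateWorker_sub P w p' hsub (interPref_sub _)
    have hlad' : P'.LAD := updateWorker_lad P w p' hlad (interPref_lad _)
    have hl_st' : Stable P' μl := stable_updateWorker_inter P w μl hl_st
    obtain ⟨νs, νl, hνs_st, hνl_st, domF', domW', rhtF', rhtW'⟩ :=
      market_results P' hsub' hlad'
    have hP'st : Stable P' (h P') := hrule P' hsub' hlad'
    have hcard : ((h P').wm w).card = (μl.wm w).card := by
      rw [rhtW' (h P') hP'st w, rhtW' μl hl_st' w]
    have hsubA : (h P').wm w ⊆ μl.wm w := by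
      have hir := hP'st.1.2 w
      rw [hP', updateWorker_wp, Function.update_self, hp', interPref_ch] at hir
      intro g hg
      rw [← hir] at hg
      exact (Finset.mem_inter.mp hg).2
    have heq : (h P').wm w = μl.wm w :=
      Finset.eq_of_subset_of_card_le hsubA (le_of_eq hcard.symm)
    refine ⟨p', interPref_sub _, interPref_lad _, ?_, ?_⟩
    · rw [← hP', heq]
      exact domW (h P) hPst w
    · rw [← hP', heq, ← hid]
      exact Ne.symm hne
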